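/- Let P be a field and H₁, H₂ commutative P-algebras. Then H₁ and H₂ are geometrically equivalent if and only if LSC(H₁) = LSC(H₂), i.e., for every commutative P-algebra B (in a universe containing that of P, H₁ and H₂): every finitely generated P-subalgebra of B embeds into some power of H₁ if and only if every finitely generated P-subalgebra of B embeds into some power of H₂. -/

import Mathlib

open MvPolynomial

universe u v w

/-- The `H`-closure `T''_H` of a set `T` of polynomials. -/
def hClosure (P : Type u) [Field P] (H : Type v) [CommRing H] [Algebra P H]
    (n : ℕ) (T : Set (MvPolynomial (Fin n) P)) : Set (MvPolynomial (Fin n) P) :=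
  {f | ∀ μ : Fin n → H, (∀ g ∈ T, aeval μ g = 0) → aeval μ f = 0}

/-- `H₁` and `H₂` are geometrically equivalent: all closure operators coincide. -/
def GeomEquiv (P : Type u) [Field P] (H₁ : Type v) [CommRing H₁] [Algebra P H₁]
    (H₂ : Type w) [CommRing H₂] [Algebra P H₂] : Prop :=
  ∀ (n : ℕ) (T : Set (MvPolynomial (Fin n) P)),
    hClosure P H₁ n T = hClosure P H₂ n T

/-- `B ∈ LSC(H)`: every finitely generated `P`-subalgebra of `B` embeds into
some power of `H`. -/
def MemLSC (P : Type u) [Field P] (H : Type v) [CommRing H] [Algebra P H]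
    (B : Type (max u v w)) [CommRing B] [Algebra P B] : Prop :=
  ∀ S : Subalgebra P B, S.FG →
    ∃ (J : Type (max u v w)) (g : S →ₐ[P] (J → H)), Function.Injective g

section helpers
universe b j r

variable {P : Type u} [Field P]

/-- ULift as an algebra equivalence. -/
def uliftAlgEquiv (A : Type b) [CommRing A] [Algebra P A] :
    ULift.{r} A ≃ₐ[P] A :=
  { ULift.ringEquiv with commutes' := fun _ => rfl }

/-- Precomposition with `ULift.down` as an algebra hom, injective. -/
noncomputable def uliftPi (H : Type v) [CommRing H] [Algebra P H] (J : Type j) :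
    (J → H) →ₐ[P] (ULift.{r} J → H) :=
  Pi.algHom _ _ fun j => Pi.evalAlgHom _ _ j.down

lemma uliftPi_injective (H : Type v) [CommRing H] [Algebra P H] (J : Type j) :
    Function.Injective (uliftPi (P := P) H J) := by
  intro a b hab
  funext j
  exact congrFun hab (ULift.up j)

/-- evaluation on zeros -/
noncomputable def evalOnZeros (H : Type v) [CommRing H] [Algebra P H] (n : ℕ)
    (T : Set (MvPolynomial (Fin n) P)) :
    MvPolynomial (Fin n) P →ₐ[P] ({μ : Fin n → H // ∀ g ∈ T, aeval μ g = 0} → H) :=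
  Pi.algHom _ _ fun μ => aeval μ.1

lemma evalOnZeros_eq_zero_iff (H : Type v) [CommRing H] [Algebra P H] {n : ℕ}
    (T : Set (MvPolynomial (Fin n) P)) (f : MvPolynomial (Fin n) P) :
    evalOnZeros H n T f = 0 ↔ f ∈ hClosure P H n T := by
  constructor
  · intro h μ hμ
    exact congrFun h ⟨μ, hμ⟩
  · intro h
    funext μ
    exact h μ.1 μ.2

lemma subset_hClosure (H : Type v) [CommRing H] [Algebra P H] {n : ℕ}
    (T : Set (MvPolynomial (Fin n) P)) : T ⊆ hClosure P H n T :=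
  fun _f hf _μ hμ => hμ _ hf

/-- Key lemma: if `A` embeds into a power of `H` then the set of polys killed
by `π : MvPolynomial → A` is closed. -/
lemma hClosure_ker_subset (H : Type v) [CommRing H] [Algebra P H] {n : ℕ}
    {A : Type b} [CommRing A] [Algebra P A]
    (π : MvPolynomial (Fin n) P →ₐ[P] A) {J : Type j} (e : A →ₐ[P] (J → H))
    (he : Function.Injective e) :
    hClosure P H n {g | π g = 0} ⊆ {g | π g = 0} := by
  intro f hf
  have h0 : e (π f) = 0 := by
    funext jj
    have key : ∀ q : MvPolynomial (Fin n) P,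
        ((Pi.evalAlgHom P (fun _ => H) jj).comp (e.comp π)) q
          = aeval (fun i => e (π (X i)) jj) q := by
      intro q
      conv_lhs => rw [aeval_unique ((Pi.evalAlgHom P (fun _ => H) jj).comp (e.comp π))]
      rfl
    have hz : ∀ g ∈ {g | π g = 0}, aeval (fun i => e (π (X i)) jj) g = 0 := by
      intro g hg
      rw [← key g]
      simp [Set.mem_setOf_eq.mp hg]
    have := hf _ hz
    rw [← key f] at this
    simpa using this
  have := he (h0.trans (map_zero e).symm)
  simpa using this

end helpers

section forward
universe b

variable {P : Type u} [Field P]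

/-- If closures agree and `S` embeds in a power of `H`, then `S` embeds in a
power of `H'`. -/
lemma embed_trans {H : Type v} [CommRing H] [Algebra P H]
    {H' : Type w} [CommRing H'] [Algebra P H']
    (hge : ∀ (n : ℕ) (T : Set (MvPolynomial (Fin n) P)),
      hClosure P H n T = hClosure P H' n T)
    {B : Type b} [CommRing B] [Algebra P B]
    (S : Subalgebra P B) (hS : S.FG)
    {J : Type j} (e : S →ₐ[P] (J → H)) (he : Function.Injective e) :
    ∃ (Z : Type w) (g : S →ₐ[P] (Z → H')), Function.Injective g := by
  obtain ⟨t, ht⟩ := hS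
  -- present S as a quotient of a polynomial ring
  let n := t.card
  let eq := (Finset.equivFin t)
  let x : Fin n → B := fun i => ((eq.symm i : t) : B)
  have hx : Set.range x = (t : Set B) := by
    ext b
    constructor
    · rintro ⟨i, rfl⟩; exact (eq.symm i).2
    · intro hb; exact ⟨eq ⟨b, hb⟩, by simp [x]⟩
  have hrange : (aeval x : MvPolynomial (Fin n) P →ₐ[P] B).range = S := by
    rw [← Algebra.adjoin_range_eq_range_aeval, hx, ht]
  let π : MvPolynomial (Fin n) P →ₐ[P] S :=
    (Subalgebra.equivOfEq _ _ hrange).toAlgHom.comp (aeval x).rangeRestrict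
  have hπ : Function.Surjective π :=
    (Subalgebra.equivOfEq _ _ hrange).surjective.comp ((aeval x).rangeRestrict_surjective)
  -- kernel is closed for H, hence for H'
  have hker : hClosure P H' n {g | π g = 0} ⊆ {g | π g = 0} := by
    rw [← hge]
    exact hClosure_ker_subset H π e he
  -- the evaluation map on zeros of the kernel
  let Φ := evalOnZeros (P := P) H' n {g | π g = 0}
  have hΦker : ∀ q, q ∈ RingHom.ker π.toRingHom → Φ q = 0 := by
    intro q hq
    rw [evalOnZeros_eq_zero_iff]
    exact subset_hClosure H' _ hq
  let lift := Ideal.Quotient.liftₐ (RingHom.ker π.toRingHom) Φ hΦker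
  have hliftinj : Function.Injective lift := by
    rw [injective_iff_map_eq_zero]
    intro a ha
    obtain ⟨q, rfl⟩ := Ideal.Quotient.mkₐ_surjective P (RingHom.ker π.toRingHom) a
    have h1 : Φ q = 0 := by
      have := ha
      exact this
    have h2 : π q = 0 := hker ((evalOnZeros_eq_zero_iff H' _ q).mp h1)
    rw [show (Ideal.Quotient.mkₐ P (RingHom.ker π.toRingHom)) q
      = Ideal.Quotient.mk (RingHom.ker π.toRingHom) q from rfl,
      Ideal.Quotient.eq_zero_iff_mem]
    exact h2
  -- S ≃ quotient
  let E : (MvPolynomial (Fin n) P ⧸ RingHom.ker π.toRingHom) ≃ₐ[P] S :=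
    Ideal.quotientKerAlgEquivOfSurjective hπ
  refine ⟨_, lift.comp E.symm.toAlgHom, hliftinj.comp E.symm.injective⟩

end forward

section backward

variable {P : Type u} [Field P]

lemma hClosure_subset_of_lsc {H : Type v} [CommRing H] [Algebra P H]
    {H' : Type w} [CommRing H'] [Algebra P H']
    (n : ℕ) (T : Set (MvPolynomial (Fin n) P))
    (hyp : ∀ (B : Type (max u v w)) [CommRing B] [Algebra P B],
      (∀ S : Subalgebra P B, S.FG →
        ∃ (J : Type (max u v w)) (g : S →ₐ[P] (J → H')), Function.Injective g) →
      (∀ S : Subalgebra P B, S.FG →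
        ∃ (J : Type (max u v w)) (g : S →ₐ[P] (J → H)), Function.Injective g)) :
    hClosure P H n T ⊆ hClosure P H' n T := by
  classical
  intro f hf μ hμ
  by_contra hne
  -- quotient by the H'-closure of T
  set Φ := evalOnZeros (P := P) H' n T with hΦ
  set K := RingHom.ker Φ.toRingHom with hK
  let Q := MvPolynomial (Fin n) P ⧸ K
  let B : Type (max u v w) := ULift.{max v w} Q
  let dEq : B ≃ₐ[P] Q := uliftAlgEquiv Q
  -- Q (hence B) embeds in a power of H'
  have emb0 : ∃ (J : Type (max u v w)) (g : B →ₐ[P] (J → H')), Function.Injective g := by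
    refine ⟨ULift.{max u v} _, (uliftPi (P := P) H' _).comp ((Ideal.kerLiftAlg Φ).comp dEq.toAlgHom), ?_⟩
    exact (uliftPi_injective (P := P) H' _).comp ((Ideal.kerLiftAlg_injective Φ).comp dEq.injective)
  have hLSC' : ∀ S : Subalgebra P B, S.FG →
      ∃ (J : Type (max u v w)) (g : S →ₐ[P] (J → H')), Function.Injective g := by
    intro S _
    obtain ⟨J, g, hg⟩ := emb0
    exact ⟨J, g.comp S.val, hg.comp Subtype.val_injective⟩
  -- B is a finitely generated algebra
  haveI ftQ : Algebra.FiniteType P Q :=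
    Algebra.FiniteType.of_surjective
      (Ideal.Quotient.mkₐ P K) (Ideal.Quotient.mkₐ_surjective P K)
  haveI ftB : Algebra.FiniteType P B :=
    Algebra.FiniteType.of_surjective dEq.symm.toAlgHom dEq.symm.surjective
  have htop : (⊤ : Subalgebra P B).FG := ftB.out
  obtain ⟨J, e, he⟩ := hyp B hLSC' ⊤ htop
  -- embedding of B into a power of H
  let emb : B →ₐ[P] (J → H) := e.comp Subalgebra.topEquiv.symm.toAlgHom
  have hembinj : Function.Injective emb := he.comp Subalgebra.topEquiv.symm.injective
  -- μ witnesses f ∉ hClosure H' T = K, so mk f ≠ 0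
  have hfK : f ∉ K := by
    intro hfK
    have : Φ f = 0 := hfK
    exact hne (((evalOnZeros_eq_zero_iff H' T f).mp this) μ hμ)
  let b : B := dEq.symm (Ideal.Quotient.mkₐ P K f)
  have hb : b ≠ 0 := by
    intro h
    apply hfK
    have : Ideal.Quotient.mkₐ P K f = 0 := by
      rw [← dEq.apply_symm_apply (Ideal.Quotient.mkₐ P K f)]
      rw [show dEq.symm (Ideal.Quotient.mkₐ P K f) = b from rfl, h, map_zero]
    rwa [show (Ideal.Quotient.mkₐ P K) f = Ideal.Quotient.mk K f from rfl,
      Ideal.Quotient.eq_zero_iff_mem] at this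
  have hembb : emb b ≠ 0 := fun h => hb (hembinj (h.trans (map_zero emb).symm))
  obtain ⟨j, hj⟩ : ∃ j, emb b j ≠ 0 := by
    by_contra h
    push_neg at h
    exact hembb (funext h)
  -- the point in H coming from coordinate j
  let ψ : MvPolynomial (Fin n) P →ₐ[P] H :=
    (Pi.evalAlgHom P (fun _ => H) j).comp
      (emb.comp (dEq.symm.toAlgHom.comp (Ideal.Quotient.mkₐ P K)))
  have hψ : ∀ q, ψ q = aeval (fun i => ψ (X i)) q := by
    intro q
    conv_lhs => rw [aeval_unique ψ]
    rfl
  have hzero : ∀ g ∈ T, aeval (fun i => ψ (X i)) g = 0 := by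
    intro g hg
    rw [← hψ g]
    have : Φ g = 0 := (evalOnZeros_eq_zero_iff H' T g).mpr (subset_hClosure H' T hg)
    have hmk : Ideal.Quotient.mkₐ P K g = 0 := by
      rw [show (Ideal.Quotient.mkₐ P K) g = Ideal.Quotient.mk K g from rfl,
        Ideal.Quotient.eq_zero_iff_mem]
      exact this
    simp [ψ, hmk]
  have := hf _ hzero
  rw [← hψ f] at this
  exact hj this

end backward

/-- `H₁` and `H₂` are geometrically equivalent iff
`LSC(H₁) = LSC(H₂)`. -/
theorem geomEquiv_iff_LSC_eq (P : Type u) [Field P]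
    (H₁ : Type v) [CommRing H₁] [Algebra P H₁]
    (H₂ : Type w) [CommRing H₂] [Algebra P H₂] :
    GeomEquiv P H₁ H₂
      ↔
    (∀ (B : Type (max u v w)) [CommRing B] [Algebra P B],
      MemLSC.{u, v, w} P H₁ B ↔ MemLSC.{u, w, v} P H₂ B) := by
  constructor
  · intro hge B _ _
    constructor
    · intro h1 S hS
      obtain ⟨J, e, he⟩ := h1 S hS
      obtain ⟨Z, g, hg⟩ := embed_trans (fun n T => hge n T) S hS e he
      exact ⟨ULift.{max u v} Z, (uliftPi (P := P) H₂ Z).comp g,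
        (uliftPi_injective (P := P) H₂ Z).comp hg⟩
    · intro h2 S hS
      obtain ⟨J, e, he⟩ := h2 S hS
      obtain ⟨Z, g, hg⟩ := embed_trans (fun n T => (hge n T).symm) S hS e he
      exact ⟨ULift.{max u w} Z, (uliftPi (P := P) H₁ Z).comp g,
        (uliftPi_injective (P := P) H₁ Z).comp hg⟩
  · intro hyp n T
    apply Set.Subset.antisymm
    · exact hClosure_subset_of_lsc n T (fun B _ _ h' => (hyp B).mpr h')
    · exact hClosure_subset_of_lsc n T (fun B _ _ h' => (hyp B).mp h')
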